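/- arXiv:2208.05371 — 2 statements merged into one kernel-verified Lean document; each statement's English description precedes it below -/
import Mathlib

section
/- For any l ∈ ℕ, any vertex set V with l+1 elements and any balanced tree G ∈ T_V, every edge of G joins a black vertex and a white vertex; that is, for every edge of G exactly one of its two endpoints lies in B(G). -/
/-! Circuit multigraphs are encoded by their routes: a circuit multigraph on a
vertex set `V ⊆ ℕ` with `N` linearly ordered edges is uniquely determined by its
route, a list `r : List ℕ` of length `N` whose entries cover `V`; the `j`-th edge
(0-indexed) goes from `r[j]` to `r[(j+1) % N]`. -/

/-- The tail of the `j`-th edge of the circuit multigraph with route `r`. -/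
def edgeTail (r : List ℕ) (j : ℕ) : ℕ := r.getD (j % r.length) 0

/-- The head of the `j`-th edge of the circuit multigraph with route `r`. -/
def edgeHead (r : List ℕ) (j : ℕ) : ℕ := r.getD ((j + 1) % r.length) 0

/-- A circuit multigraph is balanced if its edges can be partitioned into pairs
`(e, e')` such that the head of `e` is the tail of `e'` and vice versa.  We encode
the pairing by a fixed-point-free involution on the edge indices. -/
def IsBalanced (r : List ℕ) : Prop :=
  ∃ σ : Equiv.Perm (Fin r.length), ∀ k : Fin r.length,
    σ k ≠ k ∧ σ (σ k) = k ∧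
    edgeHead r k = edgeTail r (σ k) ∧ edgeHead r (σ k) = edgeTail r k

/-- The set of black vertices of the circuit multigraph with route `r`: the vertices
occurring at an odd-numbered (1-based) position of the route, i.e. at an even
0-based index. -/
def blackFinset (r : List ℕ) : Finset ℕ :=
  (((List.range r.length).filter (fun j => j % 2 = 0)).map (fun j => r.getD j 0)).toFinset

lemma aux_idxOf_le (r : List ℕ) : ∀ j, j < r.length → r.idxOf (r.getD j 0) ≤ j := by
  induction r with
  | nil => intro j h; simp at h
  | cons a t ih =>
    intro j h
    cases j with
    | zero => simp
    | succ j =>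
      have hj : j < t.length := by simpa using h
      have h2 : (a :: t).getD (j+1) 0 = t.getD j 0 := by simp
      rw [h2]
      by_cases hav : a = t.getD j 0
      · rw [List.idxOf_cons_eq _ hav]; omega
      · rw [List.idxOf_cons_ne _ hav]
        exact Nat.succ_le_succ (ih j hj)

theorem route_parity (l : ℕ) (r : List ℕ) (hlen : r.length = 2 * l)
    (hcard : r.toFinset.card = l + 1) (hbal : IsBalanced r) :
    ∀ m < r.length, r.idxOf (r.getD m 0) % 2 = m % 2 := by
  obtain ⟨σ, hσ⟩ := hbal
  set s : ℕ → ℕ := fun k => if h : k < r.length then (σ ⟨k, h⟩ : ℕ) else k with hs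
  have hs_def : ∀ k (h : k < r.length), s k = (σ ⟨k, h⟩ : ℕ) := by
    intro k h; simp only [hs]; rw [dif_pos h]
  have hs_lt : ∀ k, k < r.length → s k < r.length := by
    intro k hk; rw [hs_def k hk]; exact (σ ⟨k, hk⟩).isLt
  have hs_inv : ∀ k, k < r.length → s (s k) = k := by
    intro k hk
    have h1 : s k < r.length := hs_lt k hk
    have e : (⟨s k, h1⟩ : Fin r.length) = σ ⟨k, hk⟩ := Fin.ext (hs_def k hk)
    rw [hs_def (s k) h1, e, (hσ ⟨k, hk⟩).2.1]
  have hhead : ∀ k, k < r.length → r.getD ((k+1) % r.length) 0 = r.getD (s k) 0 := by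
    intro k hk
    have h := (hσ ⟨k, hk⟩).2.2.1
    simp only [edgeHead, edgeTail] at h
    rw [h, ← hs_def k hk, Nat.mod_eq_of_lt (hs_lt k hk)]
  have hhead2 : ∀ k, k < r.length → r.getD ((s k + 1) % r.length) 0 = r.getD k 0 := by
    intro k hk
    have h := (hσ ⟨k, hk⟩).2.2.2
    simp only [edgeHead, edgeTail] at h
    rw [← hs_def k hk] at h
    rw [h, Nat.mod_eq_of_lt hk]
  intro m₀ hm₀
  have hNpos : 0 < r.length := by omega
  have hl : 1 ≤ l := by omega
  set F : Finset ℕ := (Finset.range r.length).filter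
      (fun j => r.idxOf (r.getD j 0) = j) with hF
  have hmemF : ∀ j, j ∈ F ↔ j < r.length ∧ r.idxOf (r.getD j 0) = j := by
    intro j; simp [hF]
  have hFcard : F.card = l + 1 := by
    rw [← hcard]
    apply Finset.card_bij (fun j _ => r.getD j 0)
    · intro j hj
      have hjN : j < r.length := ((hmemF j).1 hj).1
      rw [List.getD_eq_getElem r 0 hjN]
      exact List.mem_toFinset.2 (List.getElem_mem _)
    · intro j hj j' hj' he
      have h1 := ((hmemF j).1 hj).2
      have h2 := ((hmemF j').1 hj').2
      rw [← h1, ← h2, he]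
    · intro v hv
      have hvmem : v ∈ r := List.mem_toFinset.1 hv
      have hidx : r.idxOf v < r.length := List.idxOf_lt_length_iff.2 hvmem
      refine ⟨r.idxOf v, ?_, ?_⟩
      · rw [hmemF]
        refine ⟨hidx, ?_⟩
        rw [List.getD_eq_getElem r 0 hidx, List.getElem_idxOf hidx]
      · rw [List.getD_eq_getElem r 0 hidx, List.getElem_idxOf hidx]
  have h0F : 0 ∈ F := by
    have h00 := aux_idxOf_le r 0 hNpos
    rw [hmemF]
    constructor
    · exact hNpos
    · omega
  set D : Finset ℕ := F.erase 0 with hD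
  have hmemD : ∀ j, j ∈ D ↔ j ≠ 0 ∧ j < r.length ∧ r.idxOf (r.getD j 0) = j := by
    intro j; rw [hD, Finset.mem_erase, hmemF]
  have hDcard : D.card = l := by
    rw [hD, Finset.card_erase_of_mem h0F, hFcard]; rfl
  have hpb : ∀ j ∈ D, j ≤ s (j - 1) := by
    intro j hj
    obtain ⟨hj0, hjN, hjidx⟩ := (hmemD j).1 hj
    have hj1 : j - 1 < r.length := by omega
    have he : r.getD ((j - 1 + 1) % r.length) 0 = r.getD (s (j-1)) 0 := hhead (j-1) hj1
    rw [show j - 1 + 1 = j by omega, Nat.mod_eq_of_lt hjN] at he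
    have h3 := aux_idxOf_le r (s (j-1)) (hs_lt _ hj1)
    rw [← he, hjidx] at h3
    exact h3
  have hcover : ∀ k, k < r.length → ∃ j ∈ D, k = j - 1 ∨ k = s (j - 1) := by
    set E : Finset ℕ := D.image (fun j => j - 1) ∪ D.image (fun j => s (j - 1)) with hE
    have hsub : E ⊆ Finset.range r.length := by
      intro x hx
      rw [hE, Finset.mem_union] at hx
      rcases hx with hx | hx <;> rw [Finset.mem_image] at hx <;>
        obtain ⟨j, hj, rfl⟩ := hx <;> obtain ⟨hj0, hjN, _⟩ := (hmemD j).1 hj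
      · exact Finset.mem_range.2 (by omega)
      · exact Finset.mem_range.2 (hs_lt _ (by omega))
    have hcard1 : (D.image (fun j => j - 1)).card = l := by
      rw [Finset.card_image_of_injOn, hDcard]
      intro a ha b hb hab
      have hab' : a - 1 = b - 1 := hab
      have ha1 := ((hmemD a).1 ha).1
      have hb1 := ((hmemD b).1 hb).1
      omega
    have hcard2 : (D.image (fun j => s (j - 1))).card = l := by
      rw [Finset.card_image_of_injOn, hDcard]
      intro a ha b hb hab
      have hab' : s (a - 1) = s (b - 1) := hab
      obtain ⟨ha0, haN, _⟩ := (hmemD a).1 ha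
      obtain ⟨hb0, hbN, _⟩ := (hmemD b).1 hb
      have h1 : a - 1 < r.length := by omega
      have h2 : b - 1 < r.length := by omega
      have h3 := hs_inv (a-1) h1
      rw [hab', hs_inv (b-1) h2] at h3
      omega
    have hdisj : Disjoint (D.image (fun j => j - 1)) (D.image (fun j => s (j - 1))) := by
      rw [Finset.disjoint_left]
      intro x hx1 hx2
      rw [Finset.mem_image] at hx1 hx2
      obtain ⟨j, hj, hj1⟩ := hx1
      obtain ⟨j', hj', hj2⟩ := hx2
      have hj1' : j - 1 = x := hj1
      have hj2' : s (j' - 1) = x := hj2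
      obtain ⟨hj0, hjN, _⟩ := (hmemD j).1 hj
      obtain ⟨hj0', hjN', _⟩ := (hmemD j').1 hj'
      have hb1 : j' ≤ s (j' - 1) := hpb j' hj'
      have hb2 : j ≤ s (j - 1) := hpb j hj
      have h1 : j' - 1 < r.length := by omega
      have h2 : s (j - 1) = j' - 1 := by
        rw [hj1', ← hj2', hs_inv _ h1]
      omega
    have hEcard : E.card = 2 * l := by
      rw [hE, Finset.card_union_of_disjoint hdisj, hcard1, hcard2]; omega
    have hEeq : E = Finset.range r.length := by
      apply Finset.eq_of_subset_of_card_le hsub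
      rw [Finset.card_range, hEcard, hlen]
    intro k hk
    have hkE : k ∈ E := by rw [hEeq]; exact Finset.mem_range.2 hk
    rw [hE, Finset.mem_union, Finset.mem_image, Finset.mem_image] at hkE
    rcases hkE with ⟨j, hj, hje⟩ | ⟨j, hj, hje⟩
    · exact ⟨j, hj, Or.inl hje.symm⟩
    · exact ⟨j, hj, Or.inr hje.symm⟩
  revert hm₀
  induction m₀ using Nat.strong_induction_on with
  | _ m ih =>
    intro hm
    by_cases hm0 : m = 0
    · subst hm0
      have := aux_idxOf_le r 0 hNpos
      omega
    · obtain ⟨n, rfl⟩ : ∃ n, m = n + 1 := ⟨m - 1, by omega⟩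
      have hn : n < r.length := by omega
      obtain ⟨j, hj, hcase⟩ := hcover n hn
      obtain ⟨hj0, hjN, hjidx⟩ := (hmemD j).1 hj
      rcases hcase with rfl | hns
      · rw [show j - 1 + 1 = j by omega, hjidx]
      · have hj1 : j - 1 < r.length := by omega
        have hA : r.getD n 0 = r.getD j 0 := by
          have h := hhead (j-1) hj1
          rw [show j - 1 + 1 = j by omega, Nat.mod_eq_of_lt hjN, ← hns] at h
          exact h.symm
        have hjn : j ≤ n := by rw [hns]; exact hpb j hj
        have ih1 : r.idxOf (r.getD n 0) % 2 = n % 2 := ih n (by omega) hn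
        rw [hA, hjidx] at ih1
        have hB : r.getD (n+1) 0 = r.getD (j-1) 0 := by
          have h := hhead2 (j-1) hj1
          rw [← hns, Nat.mod_eq_of_lt hm] at h
          exact h
        have ih2 : r.idxOf (r.getD (j-1) 0) % 2 = (j-1) % 2 := ih (j-1) (by omega) hj1
        rw [hB, ih2]
        omega

/-- **Lemma** (coloring of balanced trees).  For a balanced tree on a vertex set `V`
with `l+1` elements (a balanced circuit multigraph with `2l` edges whose route covers
`V`), every edge joins a black and a white vertex: exactly one endpoint of each edge
lies in the black set. -/
theorem balancedTree_edge_black_white (l : ℕ) (V : Finset ℕ) (hV : V.card = l + 1)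
    (r : List ℕ) (hlen : r.length = 2 * l) (hcov : r.toFinset = V)
    (hbal : IsBalanced r) :
    ∀ j < r.length, (edgeTail r j ∈ blackFinset r ↔ edgeHead r j ∉ blackFinset r) := by
  intro j hj
  have hNpos : 0 < r.length := by omega
  have hcard : r.toFinset.card = l + 1 := by rw [hcov, hV]
  have hpar := route_parity l r hlen hcard hbal
  have hblack : ∀ v, v ∈ r → (v ∈ blackFinset r ↔ r.idxOf v % 2 = 0) := by
    intro v hv
    constructor
    · intro hb
      unfold blackFinset at hb
      rw [List.mem_toFinset, List.mem_map] at hb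
      obtain ⟨i, hi, hiv⟩ := hb
      rw [List.mem_filter, List.mem_range] at hi
      obtain ⟨hiN, hie⟩ := hi
      have hie' : i % 2 = 0 := by simpa using hie
      have hp := hpar i hiN
      rw [hiv] at hp
      omega
    · intro h0
      have hiv : r.idxOf v < r.length := List.idxOf_lt_length_iff.2 hv
      unfold blackFinset
      rw [List.mem_toFinset, List.mem_map]
      refine ⟨r.idxOf v, ?_, ?_⟩
      · rw [List.mem_filter, List.mem_range]
        exact ⟨hiv, by simpa using h0⟩
      · rw [List.getD_eq_getElem r 0 hiv, List.getElem_idxOf hiv]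
  have hjm : j % r.length = j := Nat.mod_eq_of_lt hj
  have htmem : edgeTail r j ∈ r := by
    unfold edgeTail; rw [hjm, List.getD_eq_getElem r 0 hj]; exact List.getElem_mem _
  have hm1 : (j+1) % r.length < r.length := Nat.mod_lt _ hNpos
  have hhmem : edgeHead r j ∈ r := by
    unfold edgeHead; rw [List.getD_eq_getElem r 0 hm1]; exact List.getElem_mem _
  have ht : r.idxOf (edgeTail r j) % 2 = j % 2 := by
    unfold edgeTail; rw [hjm]; exact hpar j hj
  have hh : r.idxOf (edgeHead r j) % 2 = ((j+1) % r.length) % 2 := hpar _ hm1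
  have hmod : ((j+1) % r.length) % 2 = (j+1) % 2 := by
    rcases Nat.lt_or_ge (j+1) r.length with h | h
    · rw [Nat.mod_eq_of_lt h]
    · have hje : j + 1 = r.length := by omega
      rw [hje, Nat.mod_self]
      omega
  rw [hblack _ htmem, hblack _ hhmem]
  omega
end

section
/- Let l_0 ≥ 4 be even and let G ∈ C_{V,2l_0} be a one-directional ring-type circuit multigraph on a vertex set V of l_0 vertices (G ∈ 1-d-Ring_{l_0}). Then black and white vertices alternate along the ring: for every undirected connection {v,w} of G, exactly one of v and w lies in B(G). -/
/-- The list of undirected edges (with multiplicity) of the circuit multigraph. -/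
def uedges (r : List ℕ) : List (Sym2 ℕ) :=
  (List.range r.length).map (fun j => s(edgeTail r j, edgeHead r j))

/-- Ring-type circuit multigraph: the undirected graph `U(G)` of its undirected
connections is a cycle graph (possibly with a self-loop if there is a single vertex)
and every undirected connection consists of exactly two edges. -/
def IsRingType (r : List ℕ) : Prop :=
  (∃ c : List ℕ, c ≠ [] ∧ c.Nodup ∧ c.toFinset = r.toFinset ∧
      (uedges r).toFinset = (uedges c).toFinset) ∧
  ∀ s ∈ (uedges r).toFinset, (uedges r).count s = 2

/-- Membership in `1-d-Ring_{l₀}`: a non-balanced ring-type circuit multigraph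
with `2·l₀` edges on `l₀` vertices. -/
def mem1dRing (l₀ : ℕ) (r : List ℕ) : Prop :=
  r.length = 2 * l₀ ∧ r.toFinset.card = l₀ ∧ IsRingType r ∧ ¬ IsBalanced r

/-- Membership in `2-d-Ring_{l₀}`: a balanced ring-type circuit multigraph
with `2·l₀` edges on `l₀` vertices. -/
def mem2dRing (l₀ : ℕ) (r : List ℕ) : Prop :=
  r.length = 2 * l₀ ∧ r.toFinset.card = l₀ ∧ IsRingType r ∧ IsBalanced r

/-- **Lemma** (coloring of one-directional ring-type graphs).  For even `l₀ ≥ 4`,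
any one-directional ring-type circuit multigraph `G ∈ 1-d-Ring_{l₀}` has alternating
black and white vertices along its ring structure: every undirected connection of `G`
joins a black and a white vertex. -/
theorem oneDirRing_coloring (l₀ : ℕ) (h4 : 4 ≤ l₀) (heven : l₀ % 2 = 0)
    (r : List ℕ) (hr : mem1dRing l₀ r) :
    ∀ v w : ℕ, s(v, w) ∈ (uedges r).toFinset →
      (v ∈ blackFinset r ↔ w ∉ blackFinset r) := by
  obtain ⟨hlen, hcard, ⟨⟨c, hc_ne, hc_nd, hc_fs, hc_ue⟩, -⟩, -⟩ := hr
  have hNpos : 0 < r.length := by omega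
  have hclen : c.length = l₀ := by
    rw [← List.toFinset_card_of_nodup hc_nd, hc_fs, hcard]
  have hl2 : (2 : ℕ) ∣ c.length := by
    rw [hclen]; omega
  have hN2 : (2 : ℕ) ∣ r.length := by
    rw [hlen]; exact Dvd.intro l₀ rfl
  -- color of a vertex: parity of its index in the cycle `c`
  set col : ℕ → ℕ := fun v => c.idxOf v % 2 with hcol
  have hcol_lt : ∀ v, col v < 2 := fun v => Nat.mod_lt _ (by omega)
  -- edges of the cycle join different colors
  have colA : ∀ v w : ℕ, s(v, w) ∈ (uedges c).toFinset → col v ≠ col w := by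
    intro v w hvw
    rw [List.mem_toFinset, uedges, List.mem_map] at hvw
    obtain ⟨i, hi, heq⟩ := hvw
    rw [List.mem_range] at hi
    have hkey : ∀ k : ℕ, col (edgeTail c k) = k % 2 := by
      intro k
      have hk : k % c.length < c.length := Nat.mod_lt _ (by omega)
      have h1 := List.getD_eq_getElem c 0 hk
      have h2 := List.Nodup.idxOf_getElem hc_nd (k % c.length) hk
      show c.idxOf (edgeTail c k) % 2 = k % 2
      have h0 : edgeTail c k = c.getD (k % c.length) 0 := rfl
      rw [h0, h1, h2, Nat.mod_mod_of_dvd _ hl2]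
    have hkey' : ∀ k : ℕ, col (edgeHead c k) = (k + 1) % 2 := by
      intro k
      have : edgeHead c k = edgeTail c (k + 1) := by
        simp [edgeHead, edgeTail]
      rw [this, hkey]
    have hne : col (edgeTail c i) ≠ col (edgeHead c i) := by
      rw [hkey, hkey']; omega
    rw [Sym2.eq_iff] at heq
    rcases heq with ⟨h1, h2⟩ | ⟨h1, h2⟩
    · rw [← h1, ← h2]; exact hne
    · rw [← h1, ← h2]; exact hne.symm
  -- every step of the route is an edge of the cycle
  have hstep : ∀ j : ℕ, s(r.getD (j % r.length) 0, r.getD ((j + 1) % r.length) 0)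
      ∈ (uedges c).toFinset := by
    intro j
    rw [← hc_ue, List.mem_toFinset, uedges, List.mem_map]
    refine ⟨j % r.length, List.mem_range.mpr (Nat.mod_lt _ hNpos), ?_⟩
    simp only [edgeTail, edgeHead]
    rw [Nat.mod_mod_of_dvd j dvd_rfl, Nat.mod_add_mod]
  -- colors alternate along the route
  set e : ℕ := col (r.getD 0 0) with he
  have he_lt : e < 2 := hcol_lt _
  have falt : ∀ j : ℕ, col (r.getD (j % r.length) 0) = (j + e) % 2 := by
    intro j
    induction j with
    | zero =>
      rw [Nat.zero_mod, Nat.zero_add, Nat.mod_eq_of_lt he_lt]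
    | succ j ih =>
      have hne := colA _ _ (hstep j)
      have h1 := hcol_lt (r.getD (j % r.length) 0)
      have h2 := hcol_lt (r.getD ((j + 1) % r.length) 0)
      omega
  -- characterization of black vertices
  have hblack : ∀ j : ℕ, (r.getD (j % r.length) 0 ∈ blackFinset r ↔
      col (r.getD (j % r.length) 0) = e) := by
    intro j
    constructor
    · intro hb
      rw [blackFinset, List.mem_toFinset, List.mem_map] at hb
      obtain ⟨j', hj', heq⟩ := hb
      rw [List.mem_filter, List.mem_range] at hj'
      obtain ⟨hj'N, hj'e⟩ := hj'
      have : r.getD j' 0 = r.getD (j' % r.length) 0 := by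
        rw [Nat.mod_eq_of_lt hj'N]
      rw [← heq, this, falt j']
      simp only [decide_eq_true_eq] at hj'e
      omega
    · intro hc'
      rw [falt j] at hc'
      have hjE : j % 2 = 0 := by omega
      rw [blackFinset, List.mem_toFinset, List.mem_map]
      refine ⟨j % r.length, ?_, rfl⟩
      rw [List.mem_filter, List.mem_range]
      refine ⟨Nat.mod_lt _ hNpos, ?_⟩
      simp only [decide_eq_true_eq]
      rw [Nat.mod_mod_of_dvd _ hN2, hjE]
  -- conclusion
  intro v w hvw
  have hvwc : s(v, w) ∈ (uedges c).toFinset := hc_ue ▸ hvw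
  have hcc := colA v w hvwc
  rw [List.mem_toFinset, uedges, List.mem_map] at hvw
  obtain ⟨j, hj, heq⟩ := hvw
  rw [List.mem_range] at hj
  have htail : edgeTail r j = r.getD (j % r.length) 0 := rfl
  have hhead : edgeHead r j = r.getD ((j + 1) % r.length) 0 := rfl
  have hT := hblack j
  have hH := hblack (j + 1)
  rw [← htail] at hT
  rw [← hhead] at hH
  have hv2 := hcol_lt v
  have hw2 := hcol_lt w
  rw [Sym2.eq_iff] at heq
  rcases heq with ⟨h1, h2⟩ | ⟨h1, h2⟩
  · rw [h1] at hT; rw [h2] at hH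
    rw [hT, hH]
    omega
  · rw [h1] at hT; rw [h2] at hH
    rw [hH, hT]
    omega
end
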